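/- Let $K \subset \mathbb{C}$ be a compact set equal to its own filling-in (i.e., $\mathbb{C} \setminus K$ is connected), and let $\{A_m\}$ be a sequence of compact connected sets such that $\sup_{x \in \partial A_m} \operatorname{dist}(x, K) \to 0$, where $A_m$ is the closure of a bounded open set and $\partial A_m$ its boundary. Then $\sup_{x \in A_m} \operatorname{dist}(x, K) \to 0$ as $m \to \infty$. -/

import Mathlib

open Metric Bornology Set

private lemma cross_frontier {X : Type*} [TopologicalSpace X] {s t : Set X}
    (hs : IsPreconnected s) (h1 : (s ∩ t).Nonempty) (h2 : (s \ t).Nonempty)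
    (hdis : s ∩ frontier t = ∅) : False := by
  obtain ⟨x, hxs, hxt⟩ := h1
  obtain ⟨y, hys, hyt⟩ := h2
  have hfr : ∀ z ∈ s, z ∉ frontier t := fun z hz hf =>
    (eq_empty_iff_forall_notMem.1 hdis z) ⟨hz, hf⟩
  have hsub : s ⊆ interior t ∪ (closure t)ᶜ := by
    intro z hz
    by_cases hzc : z ∈ closure t
    · left
      by_contra hzi
      exact hfr z hz ⟨hzc, hzi⟩
    · exact Or.inr hzc
  obtain ⟨z, hzs, hzu, hzv⟩ := hs _ _ isOpen_interior isClosed_closure.isOpen_compl hsub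
    ⟨x, hxs, by
      rcases hsub hxs with h | h
      · exact h
      · exact absurd (subset_closure hxt) h⟩
    ⟨y, hys, by
      rcases hsub hys with h | h
      · exact absurd (interior_subset h) hyt
      · exact h⟩
  exact hzv (subset_closure (interior_subset hzu))

private lemma compact_segment {x y : ℂ} : IsCompact (segment ℝ x y) := by
  rw [segment_eq_image]
  exact isCompact_Icc.image (by continuity)

private lemma le_biSup_compact {s : Set ℂ} {K : Set ℂ} (hs : IsCompact s) {x : ℂ}
    (hx : x ∈ s) : infDist x K ≤ ⨆ y ∈ s, infDist y K := by
  obtain ⟨z, hzs, hz⟩ := hs.exists_isMaxOn ⟨x, hx⟩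
    ((continuous_infDist_pt K).continuousOn)
  have hbdd : BddAbove (Set.range fun y => ⨆ _ : y ∈ s, infDist y K) := by
    refine ⟨max (infDist z K) 0, ?_⟩
    rintro _ ⟨y, rfl⟩
    exact Real.iSup_le (fun hy => le_max_of_le_left (hz hy)) (le_max_right _ _)
  calc infDist x K = ⨆ _ : x ∈ s, infDist x K := (ciSup_pos (f := fun _ : x ∈ s => infDist x K) hx).symm
    _ ≤ ⨆ y ∈ s, infDist y K := le_ciSup hbdd x

theorem stmt_18 (K : Set ℂ) (hKc : IsCompact K) (hKne : K.Nonempty)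
    (hfill : IsConnected Kᶜ)
    (A : ℕ → Set ℂ)
    (hA : ∀ m, IsCompact (A m) ∧ IsConnected (A m))
    (hAcl : ∀ m, ∃ U : Set ℂ, IsOpen U ∧ IsBounded U ∧ A m = closure U)
    (hbd : Filter.Tendsto (fun m => ⨆ x ∈ frontier (A m), infDist x K)
      Filter.atTop (nhds 0)) :
    Filter.Tendsto (fun m => ⨆ x ∈ A m, infDist x K) Filter.atTop (nhds 0) := by
  -- basic objects
  obtain ⟨R0', hR0'⟩ := hKc.isBounded.subset_closedBall 0
  set R0 : ℝ := max R0' 0 with hR0def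
  have hKR0 : K ⊆ closedBall 0 R0 :=
    hR0'.trans (closedBall_subset_closedBall (le_max_left _ _))
  have hR0nn : (0:ℝ) ≤ R0 := le_max_right _ _
  set R : ℝ := R0 + 2 with hRdef
  set p : ℂ := ((R + 1 : ℝ) : ℂ) with hpdef
  have hpnorm : ‖p‖ = R + 1 := by
    rw [hpdef, Complex.norm_real, Real.norm_eq_abs, abs_of_nonneg (by linarith)]
  have hpK : p ∈ Kᶜ := by
    intro hp
    have := hKR0 hp
    rw [mem_closedBall, dist_zero_right, hpnorm] at this
    linarith
  -- frontier of A m is nonempty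
  have hfrne : ∀ m, (frontier (A m)).Nonempty := by
    intro m
    rw [nonempty_frontier_iff]
    refine ⟨(hA m).2.nonempty, fun h => ?_⟩
    exact IsCompact.ne_univ (hA m).1 h
  -- from hbd: frontier points eventually close to K
  have hfr : ∀ δ > (0:ℝ), ∃ N, ∀ m ≥ N, ∀ x ∈ frontier (A m), infDist x K < δ := by
    intro δ hδ
    rw [Metric.tendsto_atTop] at hbd
    obtain ⟨N, hN⟩ := hbd δ hδ
    refine ⟨N, fun m hm x hx => ?_⟩
    have h1 := hN m hm
    rw [Real.dist_0_eq_abs] at h1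
    have hcfr : IsCompact (frontier (A m)) :=
      IsCompact.of_isClosed_subset (hA m).1 isClosed_frontier
        (frontier_subset_closure.trans (hA m).1.isClosed.closure_eq.subset)
    calc infDist x K ≤ ⨆ y ∈ frontier (A m), infDist y K := le_biSup_compact hcfr hx
      _ ≤ |⨆ y ∈ frontier (A m), infDist y K| := le_abs_self _
      _ < δ := h1
  -- if frontier is within 1 of K then A m is inside closedBall 0 R
  have hboundA : ∀ m, (∀ x ∈ frontier (A m), infDist x K ≤ 1) → A m ⊆ closedBall 0 R := by
    intro m hfm
    have hfrR : frontier (A m) ⊆ closedBall 0 R := by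
      intro w hw
      obtain ⟨y, hyK, hwy⟩ := (infDist_lt_iff hKne).1 (lt_of_le_of_lt (hfm w hw) one_lt_two)
      have hy : ‖y‖ ≤ R0 := by
        have := hKR0 hyK
        rwa [mem_closedBall, dist_zero_right] at this
      rw [mem_closedBall, dist_zero_right]
      have h4 : ‖w‖ - ‖y‖ ≤ ‖w - y‖ := norm_sub_norm_le w y
      have h5 : ‖w - y‖ < 2 := by rwa [← dist_eq_norm]
      rw [hRdef]
      linarith
    intro x hx
    by_contra hxR
    rw [mem_closedBall, dist_zero_right, not_le] at hxR
    have hxpos : (0:ℝ) < ‖x‖ := lt_trans (by linarith) hxR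
    obtain ⟨T', hT'⟩ := (hA m).1.isBounded.subset_closedBall 0
    set T : ℝ := max T' 0 with hTdef
    have hAT : A m ⊆ closedBall 0 T :=
      hT'.trans (closedBall_subset_closedBall (le_max_left _ _))
    have hTnn : (0:ℝ) ≤ T := le_max_right _ _
    set c : ℝ := (T + ‖x‖ + 1) / ‖x‖ with hcdef
    have hc1 : (1:ℝ) ≤ c := by
      rw [hcdef, le_div_iff₀ hxpos]
      linarith
    set q : ℂ := (c : ℝ) • x with hqdef
    have hqnorm : ‖q‖ = T + ‖x‖ + 1 := by
      rw [hqdef, norm_smul, Real.norm_eq_abs, abs_of_nonneg (by linarith)]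
      rw [hcdef]
      exact div_mul_cancel₀ _ (ne_of_gt hxpos)
    have hqA : q ∉ A m := by
      intro hq
      have := hAT hq
      rw [mem_closedBall, dist_zero_right, hqnorm] at this
      linarith
    -- every point of the segment has big norm
    have hseg : ∀ w ∈ segment ℝ x q, R < ‖w‖ := by
      intro w hw
      rw [segment_eq_image] at hw
      obtain ⟨t, ht, rfl⟩ := hw
      obtain ⟨ht0, ht1⟩ := ht
      show R < ‖(1 - t) • x + t • q‖
      have heq : (1 - t) • x + t • q = ((1 - t) + t * c) • x := by
        rw [hqdef, smul_smul, add_smul]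
      rw [heq, norm_smul, Real.norm_eq_abs]
      have hco : (1:ℝ) ≤ (1 - t) + t * c := by nlinarith
      rw [abs_of_nonneg (by linarith)]
      nlinarith
    exact cross_frontier (convex_segment x q).isPreconnected
      ⟨x, left_mem_segment ℝ x q, hx⟩ ⟨q, right_mem_segment ℝ x q, hqA⟩
      (by
        apply eq_empty_iff_forall_notMem.2
        rintro w ⟨hw1, hw2⟩
        have := hfrR hw2
        rw [mem_closedBall, dist_zero_right] at this
        exact absurd this (not_le_of_gt (hseg w hw1)))
  -- path connectivity of Kᶜ
  have hopen : IsOpen Kᶜ := hKc.isClosed.isOpen_compl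
  have hpath : IsPathConnected Kᶜ := hopen.isConnected_iff_isPathConnected.1 hfill
  -- the key uniform geometric lemma
  have main : ∀ r > (0:ℝ), ∃ δ > (0:ℝ), δ ≤ r ∧ ∀ z : ℂ, infDist z K = r →
      ∃ Γ : Set ℂ, IsCompact Γ ∧ IsPreconnected Γ ∧ z ∈ Γ ∧ p ∈ Γ ∧
        ∀ w ∈ Γ, δ ≤ infDist w K := by
    intro r hr
    set S : Set ℂ := {z : ℂ | infDist z K = r} with hSdef
    have hSclosed : IsClosed S := isClosed_eq (continuous_infDist_pt K) continuous_const
    have hSsub : S ⊆ closedBall 0 (R0 + r + 1) := by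
      intro z hz
      have hzr : infDist z K < r + 1 := by
        have : infDist z K = r := hz
        linarith
      obtain ⟨y, hyK, hzy⟩ := (infDist_lt_iff hKne).1 hzr
      have hy : ‖y‖ ≤ R0 := by
        have := hKR0 hyK
        rwa [mem_closedBall, dist_zero_right] at this
      rw [mem_closedBall, dist_zero_right]
      have h4 : ‖z‖ - ‖y‖ ≤ ‖z - y‖ := norm_sub_norm_le z y
      have h5 : ‖z - y‖ < r + 1 := by rwa [← dist_eq_norm]
      linarith
    have hScomp : IsCompact S :=
      IsCompact.of_isClosed_subset (isCompact_closedBall 0 _) hSclosed hSsub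
    have key : ∀ z ∈ S, ∃ η > (0:ℝ), η ≤ r ∧ ∀ z' ∈ ball z η,
        ∃ Γ : Set ℂ, IsCompact Γ ∧ IsPreconnected Γ ∧ z' ∈ Γ ∧ p ∈ Γ ∧
          ∀ w ∈ Γ, η ≤ infDist w K := by
      intro z hz
      have hzr : infDist z K = r := hz
      have hzK : z ∈ Kᶜ := by
        intro hzK
        have := infDist_zero_of_mem hzK
        rw [hzr] at this
        linarith
      have hjoin : JoinedIn Kᶜ z p := hpath.joinedIn z hzK p hpK
      set γ := hjoin.somePath with hγdef
      set Γ0 : Set ℂ := Set.range γ with hΓ0def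
      have hΓ0comp : IsCompact Γ0 := isCompact_range γ.continuous
      have hΓ0conn : IsPreconnected Γ0 := (isConnected_range γ.continuous).isPreconnected
      have hzΓ0 : z ∈ Γ0 := ⟨0, γ.source⟩
      have hpΓ0 : p ∈ Γ0 := ⟨1, γ.target⟩
      have hΓ0K : Γ0 ⊆ Kᶜ := by
        rintro _ ⟨t, rfl⟩
        exact hjoin.somePath_mem t
      obtain ⟨w0, hw0Γ, hw0min⟩ := hΓ0comp.exists_isMinOn ⟨z, hzΓ0⟩
        ((continuous_infDist_pt K).continuousOn)
      set δ0 : ℝ := infDist w0 K with hδ0def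
      have hδ0pos : 0 < δ0 := (hKc.isClosed.notMem_iff_infDist_pos hKne).1 (hΓ0K hw0Γ)
      set η : ℝ := min δ0 r / 2 with hηdef
      have hηpos : 0 < η := by
        rw [hηdef]
        positivity
      have hηδ0 : η ≤ δ0 := by
        rw [hηdef]
        have := min_le_left δ0 r
        linarith
      have hηr : η ≤ r / 2 := by
        rw [hηdef]
        have := min_le_right δ0 r
        linarith
      refine ⟨η, hηpos, by linarith, fun z' hz' => ?_⟩
      refine ⟨segment ℝ z' z ∪ Γ0, compact_segment.union hΓ0comp,
        IsPreconnected.union z (right_mem_segment ℝ z' z) hzΓ0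
          (convex_segment z' z).isPreconnected hΓ0conn,
        Or.inl (left_mem_segment ℝ z' z), Or.inr hpΓ0, ?_⟩
      rintro w (hw | hw)
      · -- on the segment
        have hwb : w ∈ ball z η := by
          have hsub : segment ℝ z' z ⊆ ball z η :=
            (convex_ball z η).segment_subset hz' (mem_ball_self hηpos)
          exact hsub hw
        have hwz : dist w z < η := mem_ball.1 hwb
        have hlip : infDist z K ≤ infDist w K + dist z w := infDist_le_infDist_add_dist
        rw [hzr] at hlip
        rw [dist_comm] at hwz
        linarith
      · exact le_trans hηδ0 (hw0min hw)
    choose! η hηpos hηr hΓ using key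
    by_cases hSne : S.Nonempty
    · obtain ⟨t, ht⟩ := hScomp.elim_nhds_subcover' (fun z hz => ball z (η z))
        (fun z hz => ball_mem_nhds z (hηpos z hz))
      have htne : t.Nonempty := by
        by_contra hte
        rw [Finset.not_nonempty_iff_eq_empty] at hte
        obtain ⟨z, hz⟩ := hSne
        have := ht hz
        simp [hte] at this
      set δ : ℝ := min r (t.inf' htne fun z => η z) with hδdef
      have hδpos : 0 < δ := by
        rw [hδdef]
        refine lt_min hr ?_
        rw [Finset.lt_inf'_iff]
        exact fun z hzt => hηpos z z.2
      refine ⟨δ, hδpos, min_le_left _ _, fun z hz => ?_⟩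
      have hzS : z ∈ S := hz
      obtain ⟨ζ, hζ⟩ := mem_iUnion.1 (ht hzS)
      obtain ⟨hζt, hzball⟩ := mem_iUnion.1 hζ
      obtain ⟨Γ, hΓc, hΓp, hzΓ, hpΓ, hΓd⟩ := hΓ ζ ζ.2 z hzball
      refine ⟨Γ, hΓc, hΓp, hzΓ, hpΓ, fun w hw => ?_⟩
      calc δ ≤ t.inf' htne fun z => η z := min_le_right _ _
        _ ≤ η ζ := Finset.inf'_le _ hζt
        _ ≤ infDist w K := hΓd w hw
    · exact ⟨r, hr, le_refl r, fun z hz => absurd (⟨z, hz⟩ : S.Nonempty) hSne⟩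
  -- putting things together
  rw [Metric.tendsto_atTop]
  intro ε hε
  obtain ⟨δ, hδpos, hδr, hmain⟩ := main (ε / 2) (by linarith)
  set δ' : ℝ := min δ 1 with hδ'def
  have hδ'pos : 0 < δ' := lt_min hδpos one_pos
  obtain ⟨N, hN⟩ := hfr δ' hδ'pos
  refine ⟨N, fun m hm => ?_⟩
  have hfrm : ∀ x ∈ frontier (A m), infDist x K < δ' := hN m hm
  have hAR : A m ⊆ closedBall 0 R :=
    hboundA m fun x hx => le_trans (le_of_lt (hfrm x hx)) (min_le_right δ 1)
  have hpA : p ∉ A m := by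
    intro hp
    have := hAR hp
    rw [mem_closedBall, dist_zero_right, hpnorm] at this
    linarith
  have hclaim : ∀ x ∈ A m, infDist x K ≤ ε / 2 := by
    intro x hx
    by_contra hxr
    rw [not_le] at hxr
    obtain ⟨w0, hw0⟩ := hfrne m
    have hw0A : w0 ∈ A m := by
      have := frontier_subset_closure (s := A m) hw0
      rwa [(hA m).1.isClosed.closure_eq] at this
    have hw0d : infDist w0 K < δ' := hfrm w0 hw0
    have hIcc : ε / 2 ∈ Icc (infDist w0 K) (infDist x K) := by
      constructor
      · have h1 : δ' ≤ δ := min_le_left _ _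
        linarith
      · linarith
    obtain ⟨z, hzA, hzr⟩ := (hA m).2.isPreconnected.intermediate_value hw0A hx
      ((continuous_infDist_pt K).continuousOn) hIcc
    obtain ⟨Γ, hΓc, hΓp, hzΓ, hpΓ, hΓd⟩ := hmain z hzr
    refine cross_frontier hΓp ⟨z, hzΓ, hzA⟩ ⟨p, hpΓ, hpA⟩ ?_
    apply eq_empty_iff_forall_notMem.2
    rintro w ⟨hw1, hw2⟩
    have h1 : δ ≤ infDist w K := hΓd w hw1
    have h2 : infDist w K < δ' := hfrm w hw2
    have h3 : δ' ≤ δ := min_le_left _ _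
    linarith
  have hsup : (⨆ x ∈ A m, infDist x K) ≤ ε / 2 :=
    Real.iSup_le (fun x => Real.iSup_le (fun hx => hclaim x hx) (by linarith)) (by linarith)
  have hsupnn : 0 ≤ ⨆ x ∈ A m, infDist x K :=
    Real.iSup_nonneg fun x => Real.iSup_nonneg fun _ => infDist_nonneg
  rw [Real.dist_0_eq_abs, abs_of_nonneg hsupnn]
  linarith
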